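/- Conversely, if (μ_n, f_n) → (μ, f) in TL^q with μ absolutely continuous with respect to Lebesgue measure, then for every stagnating sequence of transportation maps T_n with (T_n)_# μ = μ_n one has ∫ |f(x) − f_n(T_n(x))|^q dμ(x) → 0. -/

import Mathlib

open MeasureTheory Filter Topology
open scoped ENNReal NNReal

/-- The set of couplings (transportation plans) between two measures on `ℝ/Lℤ`. -/
def couplings (L : ℝ) (μ ν : Measure (AddCircle L)) :
    Set (Measure (AddCircle L × AddCircle L)) :=
  {π | IsProbabilityMeasure π ∧ π.map Prod.fst = μ ∧ π.map Prod.snd = ν}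

/-- The `TL^q` transportation distance between `(μ,f)` and `(ν,g)`. -/
noncomputable def dTL (L q : ℝ) (μ ν : Measure (AddCircle L))
    (f g : AddCircle L → ℝ) : ℝ :=
  sInf {r : ℝ | ∃ π ∈ couplings L μ ν,
    r = (∫ z : AddCircle L × AddCircle L,
      (‖z.1 - z.2‖ ^ q + |f z.1 - g z.2| ^ q) ∂π) ^ (1 / q)}

/-- Weak convergence of measures on the circle. -/
def WeakConv (L : ℝ) (μn : ℕ → Measure (AddCircle L)) (μ : Measure (AddCircle L)) : Prop :=
  ∀ φ : AddCircle L → ℝ, Continuous φ →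
    Tendsto (fun n => ∫ x, φ x ∂(μn n)) atTop (𝓝 (∫ x, φ x ∂μ))

section Aux

variable {β E : Type*} [MeasurableSpace β] [NormedAddCommGroup E] {q : ℝ}

lemma aux_int_eq (hq0 : 0 < q) (ν : Measure β) (h : β → E)
    (hm : AEStronglyMeasurable h ν) :
    ∫ b, ‖h b‖ ^ q ∂ν = (∫⁻ b, (‖h b‖₊ : ℝ≥0∞) ^ q ∂ν).toReal := by
  rw [integral_eq_lintegral_of_nonneg_ae
      (Filter.Eventually.of_forall fun b => Real.rpow_nonneg (norm_nonneg _) q)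
      ((Real.continuous_rpow_const hq0.le).comp_aestronglyMeasurable hm.norm)]
  congr 1
  refine lintegral_congr fun b => ?_
  rw [← enorm_eq_nnnorm, ← ofReal_norm, ENNReal.ofReal_rpow_of_nonneg (norm_nonneg _) hq0.le]

lemma aux_toLintegral (hq0 : 0 < q) (ν : ℕ → Measure β) (h : ℕ → β → E)
    (hm : ∀ n, AEStronglyMeasurable (h n) (ν n))
    (hint : ∀ n, Integrable (fun b => ‖h n b‖ ^ q) (ν n))
    (hconv : Tendsto (fun n => ∫ b, ‖h n b‖ ^ q ∂ν n) atTop (𝓝 0)) :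
    Tendsto (fun n => ∫⁻ b, (‖h n b‖₊ : ℝ≥0∞) ^ q ∂ν n) atTop (𝓝 0) := by
  have hfin : ∀ n, (∫⁻ b, (‖h n b‖₊ : ℝ≥0∞) ^ q ∂ν n) ≠ ∞ := by
    intro n
    have h2 := (hint n).2
    refine ne_of_lt (lt_of_le_of_lt (le_of_eq ?_) h2)
    refine lintegral_congr fun b => ?_
    rw [← enorm_eq_nnnorm, ← ofReal_norm, ← ofReal_norm,
      ENNReal.ofReal_rpow_of_nonneg (norm_nonneg _) hq0.le, Real.norm_eq_abs,
      abs_of_nonneg (Real.rpow_nonneg (norm_nonneg _) q)]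
  refine (ENNReal.tendsto_toReal_iff hfin (x := 0) (by simp)).mp ?_
  have heq : ∀ n, (∫⁻ b, (‖h n b‖₊ : ℝ≥0∞) ^ q ∂ν n).toReal = ∫ b, ‖h n b‖ ^ q ∂ν n :=
    fun n => (aux_int_eq hq0 _ _ (hm n)).symm
  simp only [heq, ENNReal.toReal_zero]
  exact hconv

lemma aux_eLpNorm_of_lintegral (hq0 : 0 < q) (ν : ℕ → Measure β) (h : ℕ → β → E)
    (hconv : Tendsto (fun n => ∫⁻ b, (‖h n b‖₊ : ℝ≥0∞) ^ q ∂ν n) atTop (𝓝 0)) :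
    Tendsto (fun n => eLpNorm (h n) (ENNReal.ofReal q) (ν n)) atTop (𝓝 0) := by
  have hp0 : (ENNReal.ofReal q) ≠ 0 := by
    simp only [ne_eq, ENNReal.ofReal_eq_zero, not_le]; exact hq0
  have heq : ∀ n, eLpNorm (h n) (ENNReal.ofReal q) (ν n)
      = (∫⁻ b, (‖h n b‖₊ : ℝ≥0∞) ^ q ∂ν n) ^ (1/q) := by
    intro n
    rw [eLpNorm_eq_lintegral_rpow_enorm_toReal hp0 ENNReal.ofReal_ne_top,
      ENNReal.toReal_ofReal hq0.le]
    rfl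
  simp only [heq]
  have h := (ENNReal.continuous_rpow_const (y := 1/q)).tendsto 0 |>.comp hconv
  rw [ENNReal.zero_rpow_of_pos (by positivity : (0:ℝ) < 1/q)] at h
  exact h

lemma aux_lintegral_of_eLpNorm (hq0 : 0 < q) (ν : ℕ → Measure β) (h : ℕ → β → E)
    (hconv : Tendsto (fun n => eLpNorm (h n) (ENNReal.ofReal q) (ν n)) atTop (𝓝 0)) :
    Tendsto (fun n => ∫⁻ b, (‖h n b‖₊ : ℝ≥0∞) ^ q ∂ν n) atTop (𝓝 0) := by
  have hp0 : (ENNReal.ofReal q) ≠ 0 := by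
    simp only [ne_eq, ENNReal.ofReal_eq_zero, not_le]; exact hq0
  have heq : ∀ n, (∫⁻ b, (‖h n b‖₊ : ℝ≥0∞) ^ q ∂ν n)
      = eLpNorm (h n) (ENNReal.ofReal q) (ν n) ^ q := by
    intro n
    rw [eLpNorm_eq_lintegral_rpow_enorm_toReal hp0 ENNReal.ofReal_ne_top,
      ENNReal.toReal_ofReal hq0.le, ← ENNReal.rpow_mul, one_div,
      inv_mul_cancel₀ hq0.ne', ENNReal.rpow_one]
    rfl
  simp only [heq]
  have h := (ENNReal.continuous_rpow_const (y := q)).tendsto 0 |>.comp hconv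
  rw [ENNReal.zero_rpow_of_pos hq0] at h
  exact h

lemma aux_tri {p : ℝ≥0∞} (hp1 : 1 ≤ p) (ν : Measure β) (a b c : β → ℝ)
    (ha : AEStronglyMeasurable a ν) (hb : AEStronglyMeasurable b ν)
    (hc : AEStronglyMeasurable c ν) :
    eLpNorm (fun x => a x - c x) p ν
      ≤ eLpNorm (fun x => a x - b x) p ν + eLpNorm (fun x => b x - c x) p ν := by
  have hrw : (fun x => a x - c x) = (fun x => a x - b x) + fun x => b x - c x := by
    funext x
    simp only [Pi.add_apply]
    ring
  rw [hrw]
  exact eLpNorm_add_le (ha.sub hb) (hb.sub hc) hp1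

lemma aux_ucont {L : ℝ} [Fact (0 < L)] (hq : 1 ≤ q)
    (g : BoundedContinuousFunction (AddCircle L) ℝ)
    (ν : ℕ → Measure β) (hν : ∀ n, IsProbabilityMeasure (ν n))
    (u v : ℕ → β → AddCircle L)
    (hF : ∀ n, AEMeasurable (fun b => (‖u n b - v n b‖₊ : ℝ≥0∞) ^ q) (ν n))
    (hconv : Tendsto (fun n => ∫⁻ b, (‖u n b - v n b‖₊ : ℝ≥0∞) ^ q ∂ν n) atTop (𝓝 0)) :
    Tendsto (fun n => ∫⁻ b, (‖g (u n b) - g (v n b)‖₊ : ℝ≥0∞) ^ q ∂ν n) atTop (𝓝 0) := by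
  have hq0 : 0 < q := lt_of_lt_of_le one_pos hq
  rw [ENNReal.tendsto_nhds_zero]
  intro ε hε
  obtain ⟨r, hr0, hrle⟩ : ∃ r : ℝ, 0 < r ∧ ENNReal.ofReal r ≤ ε := by
    rcases eq_or_ne ε ∞ with h | h
    · exact ⟨1, one_pos, by simp [h]⟩
    · exact ⟨ε.toReal, ENNReal.toReal_pos hε.ne' h, by rw [ENNReal.ofReal_toReal h]⟩
  set e2 : ℝ≥0∞ := ENNReal.ofReal (r/2) with he2
  have he2pos : 0 < e2 := by
    rw [he2, ENNReal.ofReal_pos]; positivity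
  -- threshold for uniform continuity
  set r' : ℝ := (r/2) ^ (1/q) with hr'
  have hr'0 : 0 < r' := Real.rpow_pos_of_pos (by positivity) _
  have hr'q : ENNReal.ofReal r' ^ q = e2 := by
    rw [hr', ENNReal.ofReal_rpow_of_nonneg (by positivity) (by positivity),
      ← Real.rpow_mul (by positivity), one_div, inv_mul_cancel₀ hq0.ne', Real.rpow_one]
  obtain ⟨δ, hδ0, hδ⟩ := Metric.uniformContinuous_iff.mp
    (CompactSpace.uniformContinuous_of_continuous g.continuous) r' hr'0
  set C : ℝ≥0∞ := (ENNReal.ofReal (2 * ‖g‖) + 1) ^ q with hC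
  have hCb0 : (0:ℝ≥0∞) < ENNReal.ofReal (2 * ‖g‖) + 1 :=
    lt_of_lt_of_le zero_lt_one le_add_self
  have hCbtop : ENNReal.ofReal (2 * ‖g‖) + 1 ≠ ∞ :=
    ENNReal.add_ne_top.mpr ⟨ENNReal.ofReal_ne_top, ENNReal.one_ne_top⟩
  have hC0 : C ≠ 0 := by
    rw [hC]; exact (ENNReal.rpow_pos hCb0 hCbtop).ne'
  have hCtop : C ≠ ∞ := by
    rw [hC]; exact ENNReal.rpow_ne_top_of_nonneg hq0.le hCbtop
  set d : ℝ≥0∞ := ENNReal.ofReal δ ^ q with hd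
  have hd0 : d ≠ 0 := by
    rw [hd]; exact (ENNReal.rpow_pos (ENNReal.ofReal_pos.mpr hδ0) ENNReal.ofReal_ne_top).ne'
  have hdtop : d ≠ ∞ := by
    rw [hd]; exact ENNReal.rpow_ne_top_of_nonneg hq0.le ENNReal.ofReal_ne_top
  set η : ℝ≥0∞ := e2 / C with hη
  have hη0 : 0 < η := ENNReal.div_pos he2pos.ne' hCtop
  have hev : ∀ᶠ n in atTop, (∫⁻ b, (‖u n b - v n b‖₊ : ℝ≥0∞) ^ q ∂ν n) ≤ d * η :=
    ENNReal.tendsto_nhds_zero.mp hconv _ (ENNReal.mul_pos hd0 hη0.ne')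
  filter_upwards [hev] with n hn
  set S := {b | d ≤ (‖u n b - v n b‖₊ : ℝ≥0∞) ^ q} with hS
  have hνS : ν n S ≤ η := by
    have hm := mul_meas_ge_le_lintegral₀ (hF n) d
    exact (ENNReal.mul_le_mul_iff_right hd0 hdtop).mp (hm.trans hn)
  have hpt : ∀ b, (‖g (u n b) - g (v n b)‖₊ : ℝ≥0∞) ^ q
      ≤ e2 + S.indicator (fun _ => C) b := by
    intro b
    by_cases hb : b ∈ S
    · rw [Set.indicator_of_mem hb]
      refine le_trans ?_ le_add_self
      rw [hC]
      refine ENNReal.rpow_le_rpow ?_ hq0.le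
      rw [← enorm_eq_nnnorm, ← ofReal_norm]
      refine le_trans (ENNReal.ofReal_le_ofReal ?_) le_self_add
      calc ‖g (u n b) - g (v n b)‖ ≤ ‖g (u n b)‖ + ‖g (v n b)‖ := norm_sub_le _ _
        _ ≤ ‖g‖ + ‖g‖ := add_le_add (g.norm_coe_le_norm _) (g.norm_coe_le_norm _)
        _ = 2 * ‖g‖ := (two_mul _).symm
    · rw [Set.indicator_of_notMem hb, add_zero]
      have hlt : (‖u n b - v n b‖₊ : ℝ≥0∞) ^ q < d := lt_of_not_ge hb
      rw [hd] at hlt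
      have h1 : (‖u n b - v n b‖₊ : ℝ≥0∞) < ENNReal.ofReal δ :=
        (ENNReal.rpow_lt_rpow_iff hq0).mp hlt
      rw [← enorm_eq_nnnorm, ← ofReal_norm] at h1
      have hdist : dist (u n b) (v n b) < δ := by
        rw [dist_eq_norm]
        exact (ENNReal.ofReal_lt_ofReal_iff hδ0).mp h1
      have h2 : ‖g (u n b) - g (v n b)‖ < r' := by
        rw [← dist_eq_norm]
        exact hδ hdist
      rw [← hr'q]
      refine ENNReal.rpow_le_rpow ?_ hq0.le
      rw [← enorm_eq_nnnorm, ← ofReal_norm]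
      exact ENNReal.ofReal_le_ofReal h2.le
  calc (∫⁻ b, (‖g (u n b) - g (v n b)‖₊ : ℝ≥0∞) ^ q ∂ν n)
      ≤ ∫⁻ b, (e2 + S.indicator (fun _ => C) b) ∂ν n := lintegral_mono hpt
    _ = e2 * (ν n) Set.univ + ∫⁻ b, S.indicator (fun _ => C) b ∂ν n := by
        rw [lintegral_add_left measurable_const, lintegral_const]
    _ ≤ e2 + C * ν n S := by
        rw [(hν n).measure_univ, mul_one]
        exact add_le_add_right (lintegral_indicator_const_le _ _) _
    _ ≤ e2 + C * η := add_le_add_right (mul_le_mul_right hνS _) _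
    _ ≤ e2 + e2 := add_le_add_right (by rw [hη]; exact ENNReal.mul_div_le) _
    _ ≤ ENNReal.ofReal r := by
        rw [he2, ← ENNReal.ofReal_add (by positivity) (by positivity)]
        exact le_of_eq (by norm_num)
    _ ≤ ε := hrle

end Aux

/-- If `(μ_n,f_n) → (μ,f)` in `TL^q` with `μ` absolutely continuous w.r.t. Lebesgue
measure, then for every stagnating sequence of transportation maps `T_n` with
`(T_n)_# μ = μ_n` one has `∫ |f - f_n ∘ T_n|^q dμ → 0`. -/
theorem stmt_4 (L q : ℝ) [Fact (0 < L)] (hq : 1 ≤ q)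
    (μ : Measure (AddCircle L)) (μn : ℕ → Measure (AddCircle L))
    (f : AddCircle L → ℝ) (fn : ℕ → AddCircle L → ℝ)
    (hμ : IsProbabilityMeasure μ) (hμn : ∀ n, IsProbabilityMeasure (μn n))
    (hf : MemLp f (ENNReal.ofReal q) μ)
    (hfn : ∀ n, MemLp (fn n) (ENNReal.ofReal q) (μn n))
    (hac : μ ≪ MeasureTheory.volume)
    (hTL : Tendsto (fun n => dTL L q (μn n) μ (fn n) f) atTop (𝓝 0)) :
    ∀ T : ℕ → AddCircle L → AddCircle L,
      (∀ n, Measurable (T n)) →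
      (∀ n, μ.map (T n) = μn n) →
      Tendsto (fun n => ∫ x, ‖x - T n x‖ ^ q ∂μ) atTop (𝓝 0) →
      Tendsto (fun n => ∫ x, |f x - fn n (T n x)| ^ q ∂μ) atTop (𝓝 0) := by
  intro T hTm hTmap hTc
  have hq0 : 0 < q := lt_of_lt_of_le one_pos hq
  have hptR : (ENNReal.ofReal q).toReal = q := ENNReal.toReal_ofReal hq0.le
  have hp0 : (ENNReal.ofReal q) ≠ 0 := by
    simp only [ne_eq, ENNReal.ofReal_eq_zero, not_le]; exact hq0
  have hpt : (ENNReal.ofReal q) ≠ ∞ := ENNReal.ofReal_ne_top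
  have hp1 : 1 ≤ ENNReal.ofReal q := by
    rw [← ENNReal.ofReal_one]; exact ENNReal.ofReal_le_ofReal hq
  have hfm : AEStronglyMeasurable f μ := hf.1
  -- Step A: extract near-optimal couplings
  have hcoup : ∀ n, ∃ π : Measure (AddCircle L × AddCircle L),
      π ∈ couplings L (μn n) μ ∧
      (∫ z : AddCircle L × AddCircle L,
          (‖z.1 - z.2‖ ^ q + |fn n z.1 - f z.2| ^ q) ∂π) ^ (1/q)
        < dTL L q (μn n) μ (fn n) f + 1/(n+1) := by
    intro n
    have hγm : Measurable (fun x : AddCircle L => (T n x, x)) :=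
      (hTm n).prodMk measurable_id
    have hγ : (μ.map (fun x => (T n x, x))) ∈ couplings L (μn n) μ := by
      refine ⟨Measure.isProbabilityMeasure_map hγm.aemeasurable, ?_, ?_⟩
      · rw [Measure.map_map measurable_fst hγm]
        exact hTmap n
      · rw [Measure.map_map measurable_snd hγm]
        have hid : (Prod.snd ∘ fun x : AddCircle L => (T n x, x)) = id := rfl
        rw [hid, Measure.map_id]
    have hne : {r : ℝ | ∃ π ∈ couplings L (μn n) μ,
        r = (∫ z : AddCircle L × AddCircle L,
          (‖z.1 - z.2‖ ^ q + |fn n z.1 - f z.2| ^ q) ∂π) ^ (1 / q)}.Nonempty :=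
      ⟨_, _, hγ, rfl⟩
    obtain ⟨a, ⟨π, hπ, rfl⟩, ha⟩ :=
      Real.lt_sInf_add_pos hne (by positivity : (0:ℝ) < 1/(n+1))
    exact ⟨π, hπ, ha⟩
  choose π hπmem hπlt using hcoup
  have hπprob : ∀ n, IsProbabilityMeasure (π n) := fun n => (hπmem n).1
  have hπfst : ∀ n, (π n).map Prod.fst = μn n := fun n => (hπmem n).2.1
  have hπsnd : ∀ n, (π n).map Prod.snd = μ := fun n => (hπmem n).2.2
  -- cost tends to zero
  have hcost_nonneg : ∀ n, 0 ≤ ∫ z : AddCircle L × AddCircle L,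
      (‖z.1 - z.2‖ ^ q + |fn n z.1 - f z.2| ^ q) ∂π n := fun n =>
    integral_nonneg fun z => add_nonneg (Real.rpow_nonneg (norm_nonneg _) q)
      (Real.rpow_nonneg (abs_nonneg _) q)
  have hroot : Tendsto (fun n => (∫ z : AddCircle L × AddCircle L,
      (‖z.1 - z.2‖ ^ q + |fn n z.1 - f z.2| ^ q) ∂π n) ^ (1/q)) atTop (𝓝 0) := by
    refine squeeze_zero (fun n => Real.rpow_nonneg (hcost_nonneg n) _)
      (fun n => (hπlt n).le) ?_
    simpa using hTL.add tendsto_one_div_add_atTop_nhds_zero_nat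
  have hcost : Tendsto (fun n => ∫ z : AddCircle L × AddCircle L,
      (‖z.1 - z.2‖ ^ q + |fn n z.1 - f z.2| ^ q) ∂π n) atTop (𝓝 0) := by
    have h2 := hroot.rpow_const (p := q) (Or.inr hq0.le)
    rw [Real.zero_rpow hq0.ne'] at h2
    refine h2.congr fun n => ?_
    rw [← Real.rpow_mul (hcost_nonneg n), one_div, inv_mul_cancel₀ hq0.ne', Real.rpow_one]
  -- measurability on the product space
  have hfnfst : ∀ n, MemLp (fun z : AddCircle L × AddCircle L => fn n z.1)
      (ENNReal.ofReal q) (π n) := by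
    intro n
    have := (hfn n)
    rw [← hπfst n] at this
    exact this.comp_of_map measurable_fst.aemeasurable
  have hfsnd : ∀ n, MemLp (fun z : AddCircle L × AddCircle L => f z.2)
      (ENNReal.ofReal q) (π n) := by
    intro n
    have := hf
    rw [← hπsnd n] at this
    exact this.comp_of_map measurable_snd.aemeasurable
  have hBmem : ∀ n, MemLp (fun z : AddCircle L × AddCircle L => fn n z.1 - f z.2)
      (ENNReal.ofReal q) (π n) := fun n => (hfnfst n).sub (hfsnd n)
  have hAcont : Continuous (fun z : AddCircle L × AddCircle L => ‖z.1 - z.2‖ ^ q) :=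
    (continuous_fst.sub continuous_snd).norm.rpow_const fun _ => Or.inr hq0.le
  have hAint : ∀ n, Integrable (fun z : AddCircle L × AddCircle L => ‖z.1 - z.2‖ ^ q) (π n) :=
    fun n => hAcont.integrable_of_hasCompactSupport (HasCompactSupport.of_compactSpace _)
  have hBint : ∀ n, Integrable
      (fun z : AddCircle L × AddCircle L => |fn n z.1 - f z.2| ^ q) (π n) := by
    intro n
    have := (hBmem n).integrable_norm_rpow hp0 hpt
    simpa [hptR, Real.norm_eq_abs] using this
  have hsplit : ∀ n, (∫ z : AddCircle L × AddCircle L,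
      (‖z.1 - z.2‖ ^ q + |fn n z.1 - f z.2| ^ q) ∂π n)
      = (∫ z : AddCircle L × AddCircle L, ‖z.1 - z.2‖ ^ q ∂π n)
        + ∫ z : AddCircle L × AddCircle L, |fn n z.1 - f z.2| ^ q ∂π n :=
    fun n => integral_add (hAint n) (hBint n)
  have hA0 : Tendsto (fun n => ∫ z : AddCircle L × AddCircle L,
      ‖z.1 - z.2‖ ^ q ∂π n) atTop (𝓝 0) := by
    refine squeeze_zero (fun n => integral_nonneg fun z => Real.rpow_nonneg (norm_nonneg _) q)
      (fun n => ?_) hcost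
    rw [hsplit n]
    exact le_add_of_nonneg_right
      (integral_nonneg fun z => Real.rpow_nonneg (abs_nonneg _) q)
  have hB0 : Tendsto (fun n => ∫ z : AddCircle L × AddCircle L,
      |fn n z.1 - f z.2| ^ q ∂π n) atTop (𝓝 0) := by
    refine squeeze_zero (fun n => integral_nonneg fun z => Real.rpow_nonneg (abs_nonneg _) q)
      (fun n => ?_) hcost
    rw [hsplit n]
    exact le_add_of_nonneg_left
      (integral_nonneg fun z => Real.rpow_nonneg (norm_nonneg _) q)
  -- lintegral versions
  have hA0' : Tendsto (fun n => ∫⁻ z : AddCircle L × AddCircle L,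
      (‖z.1 - z.2‖₊ : ℝ≥0∞) ^ q ∂π n) atTop (𝓝 0) := by
    refine aux_toLintegral hq0 π (fun n z => z.1 - z.2)
      (fun n => (continuous_fst.sub continuous_snd).aestronglyMeasurable)
      (fun n => hAint n) hA0
  have hB0' : Tendsto (fun n => ∫⁻ z : AddCircle L × AddCircle L,
      (‖fn n z.1 - f z.2‖₊ : ℝ≥0∞) ^ q ∂π n) atTop (𝓝 0) := by
    refine aux_toLintegral hq0 π (fun n z => fn n z.1 - f z.2)
      (fun n => (hBmem n).1) (fun n => ?_) ?_
    · simpa [Real.norm_eq_abs] using hBint n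
    · simpa [Real.norm_eq_abs] using hB0
  have hTc' : Tendsto (fun n => ∫⁻ x, (‖x - T n x‖₊ : ℝ≥0∞) ^ q ∂μ) atTop (𝓝 0) := by
    have hsm : ∀ n, AEStronglyMeasurable (fun x => x - T n x) μ :=
      fun n => (measurable_id.sub (hTm n)).aestronglyMeasurable
    obtain ⟨C, hC⟩ := (isCompact_range (continuous_norm (E := AddCircle L))).bddAbove
    have hint : ∀ n, Integrable (fun x => ‖x - T n x‖ ^ q) μ := by
      intro n
      have hmem : MemLp (fun x => x - T n x) (ENNReal.ofReal q) μ :=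
        (memLp_top_of_bound (hsm n) C
          (Filter.Eventually.of_forall fun x => hC ⟨_, rfl⟩)).mono_exponent le_top
      simpa [hptR] using hmem.integrable_norm_rpow hp0 hpt
    exact aux_toLintegral hq0 (fun _ => μ) (fun n x => x - T n x) hsm hint hTc
  -- more measurability
  have hfnT : ∀ n, AEStronglyMeasurable (fun x => fn n (T n x)) μ := by
    intro n
    have := (hfn n).1
    rw [← hTmap n] at this
    exact this.comp_aemeasurable (hTm n).aemeasurable
  -- Step D: eLpNorm convergence
  have key : Tendsto (fun n => eLpNorm (fun x => f x - fn n (T n x)) (ENNReal.ofReal q) μ)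
      atTop (𝓝 0) := by
    rw [ENNReal.tendsto_nhds_zero]
    intro ε hε
    obtain ⟨r, hr0, hrle⟩ : ∃ r : ℝ, 0 < r ∧ ENNReal.ofReal r ≤ ε := by
      rcases eq_or_ne ε ∞ with h | h
      · exact ⟨1, one_pos, by simp [h]⟩
      · exact ⟨ε.toReal, ENNReal.toReal_pos hε.ne' h, by rw [ENNReal.ofReal_toReal h]⟩
    obtain ⟨g, hg_close, hg_mem⟩ := hf.exists_boundedContinuous_eLpNorm_sub_le hpt
      (ε := ENNReal.ofReal (r/4)) (by simp only [ne_eq, ENNReal.ofReal_eq_zero, not_le]; positivity)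
    have hg_close' : eLpNorm (fun x => f x - g x) (ENNReal.ofReal q) μ ≤ ENNReal.ofReal (r/4) := by
      exact hg_close
    -- measurability of compositions with g
    have hgm : AEStronglyMeasurable (fun x : AddCircle L => g x) μ :=
      g.continuous.aestronglyMeasurable
    -- term B : g - g ∘ T n
    have htermB : Tendsto (fun n => eLpNorm (fun x => g x - g (T n x))
        (ENNReal.ofReal q) μ) atTop (𝓝 0) := by
      refine aux_eLpNorm_of_lintegral hq0 (fun _ => μ) _ ?_
      refine aux_ucont hq g (fun _ => μ) (fun _ => hμ) (fun n x => x) (fun n => T n)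
        (fun n => ?_) hTc'
      exact ((measurable_id.sub (hTm n)).nnnorm.coe_nnreal_ennreal.pow_const q).aemeasurable
    -- term C1 : g z1 - g z2 on π n
    have htermC1 : Tendsto (fun n => eLpNorm
        (fun z : AddCircle L × AddCircle L => g z.1 - g z.2) (ENNReal.ofReal q) (π n))
        atTop (𝓝 0) := by
      refine aux_eLpNorm_of_lintegral hq0 π _ ?_
      refine aux_ucont hq g π hπprob (fun n z => z.1) (fun n z => z.2)
        (fun n => ?_) hA0'
      exact ((measurable_fst.sub measurable_snd).nnnorm.coe_nnreal_ennreal.pow_const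
        q).aemeasurable
    -- term C3 : f z2 - fn z1 on π n
    have htermC3 : Tendsto (fun n => eLpNorm
        (fun z : AddCircle L × AddCircle L => f z.2 - fn n z.1) (ENNReal.ofReal q) (π n))
        atTop (𝓝 0) := by
      refine aux_eLpNorm_of_lintegral hq0 π _ ?_
      refine hB0'.congr fun n => ?_
      refine lintegral_congr fun z => ?_
      rw [← nnnorm_neg (fn n z.1 - f z.2), neg_sub]
    -- term C2 : g z2 - f z2 on π n, bounded by r/4
    have htermC2 : ∀ n, eLpNorm (fun z : AddCircle L × AddCircle L => g z.2 - f z.2)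
        (ENNReal.ofReal q) (π n) ≤ ENNReal.ofReal (r/4) := by
      intro n
      have hgf : AEStronglyMeasurable (fun x => g x - f x) ((π n).map Prod.snd) := by
        rw [hπsnd n]
        exact hgm.sub hfm
      have := eLpNorm_map_measure (p := ENNReal.ofReal q) hgf measurable_snd.aemeasurable
      rw [hπsnd n] at this
      have heqn : eLpNorm (fun z : AddCircle L × AddCircle L => g z.2 - f z.2)
          (ENNReal.ofReal q) (π n) = eLpNorm (fun x => g x - f x) (ENNReal.ofReal q) μ :=
        this.symm
      rw [heqn]
      have hneg : eLpNorm (fun x => g x - f x) (ENNReal.ofReal q) μ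
          = eLpNorm (fun x => f x - g x) (ENNReal.ofReal q) μ := by
        have : (fun x => g x - f x) = -(fun x => f x - g x) := by
          funext x; simp [Pi.neg_apply]
        rw [this, eLpNorm_neg]
      rw [hneg]
      exact hg_close'
    -- collect eventual bounds
    have h8 : (0:ℝ≥0∞) < ENNReal.ofReal (r/8) := by
      rw [ENNReal.ofReal_pos]; positivity
    have hevB := ENNReal.tendsto_nhds_zero.mp htermB _ h8
    have hevC1 := ENNReal.tendsto_nhds_zero.mp htermC1 _ h8
    have hevC3 := ENNReal.tendsto_nhds_zero.mp htermC3 _ h8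
    filter_upwards [hevB, hevC1, hevC3] with n hnB hnC1 hnC3
    -- AESM facts on π n
    have hg1 : AEStronglyMeasurable (fun z : AddCircle L × AddCircle L => g z.1) (π n) :=
      (g.continuous.comp continuous_fst).aestronglyMeasurable
    have hg2 : AEStronglyMeasurable (fun z : AddCircle L × AddCircle L => g z.2) (π n) :=
      (g.continuous.comp continuous_snd).aestronglyMeasurable
    have hf2 : AEStronglyMeasurable (fun z : AddCircle L × AddCircle L => f z.2) (π n) :=
      (hfsnd n).1
    have hfn1 : AEStronglyMeasurable (fun z : AddCircle L × AddCircle L => fn n z.1) (π n) :=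
      (hfnfst n).1
    have hgT : AEStronglyMeasurable (fun x => g (T n x)) μ :=
      (g.continuous.measurable.comp (hTm n)).aestronglyMeasurable
    -- identify the pulled-back term
    have hpull : eLpNorm (fun x => g (T n x) - fn n (T n x)) (ENNReal.ofReal q) μ
        = eLpNorm (fun z : AddCircle L × AddCircle L => g z.1 - fn n z.1)
            (ENNReal.ofReal q) (π n) := by
      have hmean : AEStronglyMeasurable (fun y => g y - fn n y) (μ.map (T n)) := by
        rw [hTmap n]
        exact g.continuous.aestronglyMeasurable.sub (hfn n).1
      have h1 : eLpNorm (fun y => g y - fn n y) (ENNReal.ofReal q) (μ.map (T n))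
          = eLpNorm ((fun y => g y - fn n y) ∘ T n) (ENNReal.ofReal q) μ :=
        eLpNorm_map_measure hmean (hTm n).aemeasurable
      have hmean2 : AEStronglyMeasurable (fun y => g y - fn n y) ((π n).map Prod.fst) := by
        rw [hπfst n, ← hTmap n]
        exact hmean
      have h2 : eLpNorm (fun y => g y - fn n y) (ENNReal.ofReal q) ((π n).map Prod.fst)
          = eLpNorm ((fun y => g y - fn n y) ∘ Prod.fst) (ENNReal.ofReal q) (π n) :=
        eLpNorm_map_measure hmean2 measurable_fst.aemeasurable
      calc eLpNorm (fun x => g (T n x) - fn n (T n x)) (ENNReal.ofReal q) μ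
          = eLpNorm ((fun y => g y - fn n y) ∘ T n) (ENNReal.ofReal q) μ := rfl
        _ = eLpNorm (fun y => g y - fn n y) (ENNReal.ofReal q) (μ.map (T n)) := h1.symm
        _ = eLpNorm (fun y => g y - fn n y) (ENNReal.ofReal q) ((π n).map Prod.fst) := by
            rw [hTmap n, hπfst n]
        _ = eLpNorm (fun z : AddCircle L × AddCircle L => g z.1 - fn n z.1)
              (ENNReal.ofReal q) (π n) := h2
    -- main chain
    calc eLpNorm (fun x => f x - fn n (T n x)) (ENNReal.ofReal q) μ
        ≤ eLpNorm (fun x => f x - g x) (ENNReal.ofReal q) μ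
          + eLpNorm (fun x => g x - fn n (T n x)) (ENNReal.ofReal q) μ :=
          aux_tri hp1 μ _ _ _ hfm hgm (hfnT n)
      _ ≤ eLpNorm (fun x => f x - g x) (ENNReal.ofReal q) μ
          + (eLpNorm (fun x => g x - g (T n x)) (ENNReal.ofReal q) μ
            + eLpNorm (fun x => g (T n x) - fn n (T n x)) (ENNReal.ofReal q) μ) :=
          add_le_add_right (aux_tri hp1 μ _ _ _ hgm hgT (hfnT n)) _
      _ = eLpNorm (fun x => f x - g x) (ENNReal.ofReal q) μ
          + (eLpNorm (fun x => g x - g (T n x)) (ENNReal.ofReal q) μ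
            + eLpNorm (fun z : AddCircle L × AddCircle L => g z.1 - fn n z.1)
                (ENNReal.ofReal q) (π n)) := by rw [hpull]
      _ ≤ eLpNorm (fun x => f x - g x) (ENNReal.ofReal q) μ
          + (eLpNorm (fun x => g x - g (T n x)) (ENNReal.ofReal q) μ
            + (eLpNorm (fun z : AddCircle L × AddCircle L => g z.1 - g z.2)
                (ENNReal.ofReal q) (π n)
              + eLpNorm (fun z : AddCircle L × AddCircle L => g z.2 - fn n z.1)
                (ENNReal.ofReal q) (π n))) := by
          refine add_le_add_right (add_le_add_right ?_ _) _
          exact aux_tri hp1 (π n) _ _ _ hg1 hg2 hfn1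
      _ ≤ eLpNorm (fun x => f x - g x) (ENNReal.ofReal q) μ
          + (eLpNorm (fun x => g x - g (T n x)) (ENNReal.ofReal q) μ
            + (eLpNorm (fun z : AddCircle L × AddCircle L => g z.1 - g z.2)
                (ENNReal.ofReal q) (π n)
              + (eLpNorm (fun z : AddCircle L × AddCircle L => g z.2 - f z.2)
                  (ENNReal.ofReal q) (π n)
                + eLpNorm (fun z : AddCircle L × AddCircle L => f z.2 - fn n z.1)
                  (ENNReal.ofReal q) (π n)))) := by
          refine add_le_add_right (add_le_add_right (add_le_add_right ?_ _) _) _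
          exact aux_tri hp1 (π n) _ _ _ hg2 hf2 hfn1
      _ ≤ ENNReal.ofReal (r/4) + (ENNReal.ofReal (r/8) + (ENNReal.ofReal (r/8)
            + (ENNReal.ofReal (r/4) + ENNReal.ofReal (r/8)))) := by
          exact add_le_add hg_close' (add_le_add hnB (add_le_add hnC1
            (add_le_add (htermC2 n) hnC3)))
      _ ≤ ENNReal.ofReal r := by
          rw [← ENNReal.ofReal_add (by positivity) (by positivity),
            ← ENNReal.ofReal_add (by positivity) (by positivity),
            ← ENNReal.ofReal_add (by positivity) (by positivity),
            ← ENNReal.ofReal_add (by positivity) (by positivity)]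
          exact ENNReal.ofReal_le_ofReal (by linarith)
      _ ≤ ε := hrle
  -- Step E: conclude
  have key' : Tendsto (fun n => ∫⁻ x, (‖f x - fn n (T n x)‖₊ : ℝ≥0∞) ^ q ∂μ) atTop (𝓝 0) :=
    aux_lintegral_of_eLpNorm hq0 (fun _ => μ) _ key
  have hfinal := (ENNReal.tendsto_toReal (by simp : (0:ℝ≥0∞) ≠ ∞)).comp key'
  refine hfinal.congr fun n => ?_
  have := aux_int_eq hq0 μ (fun x => f x - fn n (T n x)) (hfm.sub (hfnT n))
  simp only [Function.comp_def]
  rw [← this]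
  refine integral_congr_ae (Filter.Eventually.of_forall fun x => ?_)
  simp [Real.norm_eq_abs]
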